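/- arXiv:2307.00073 — 7 statements merged into one kernel-verified Lean document; each statement's English description precedes it below -/
import Mathlib

section
/- Let A be a commutative ring and f₁, …, fₙ elements of A generating the unit ideal. Suppose that for each i we are given a finitely generated ideal Iᵢ ⊆ A_{fᵢ} of the localization of A at fᵢ, such that for all i, j the extensions of Iᵢ and Iⱼ to A_{fᵢfⱼ} agree. Then there exists a finitely generated ideal I ⊆ A such that for each i the extension of I to A_{fᵢ} equals Iᵢ. -/
/-- The canonical map `A_a → A_b` when `a ∣ b`. -/
noncomputable def locRingMap {A : Type*} [CommRing A] (a b : A) (h : a ∣ b) :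
    Localization.Away a →+* Localization.Away b :=
  Localization.awayLift (algebraMap A (Localization.Away b)) a
    (IsLocalization.Away.isUnit_of_dvd b h)

theorem locRingMap_algebraMap {A : Type*} [CommRing A] (a b : A) (h : a ∣ b) (z : A) :
    locRingMap a b h (algebraMap A (Localization.Away a) z)
      = algebraMap A (Localization.Away b) z :=
  IsLocalization.Away.lift_eq a (IsLocalization.Away.isUnit_of_dvd b h) z

theorem exists_pow_mul_mem {A : Type*} [CommRing A] (a b : A)
    (Ij : Ideal (Localization.Away b)) {y : Localization.Away b}
    (h : locRingMap b (a * b) (dvd_mul_left _ _) y ∈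
      Ij.map (locRingMap b (a * b) (dvd_mul_left _ _))) :
    ∃ N : ℕ, algebraMap A (Localization.Away b) a ^ N * y ∈ Ij := by
  letI : Algebra (Localization.Away b) (Localization.Away (a * b)) :=
    (locRingMap b (a * b) (dvd_mul_left _ _)).toAlgebra
  have halg : algebraMap (Localization.Away b) (Localization.Away (a * b)) =
      locRingMap b (a * b) (dvd_mul_left _ _) := rfl
  haveI tower : IsScalarTower A (Localization.Away b) (Localization.Away (a * b)) :=
    IsScalarTower.of_algebraMap_eq fun z =>
      (locRingMap_algebraMap b (a * b) (dvd_mul_left _ _) z).symm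
  have hAT : ∀ z : A, algebraMap (Localization.Away b) (Localization.Away (a * b))
      (algebraMap A (Localization.Away b) z) = algebraMap A (Localization.Away (a * b)) z :=
    fun z => (IsScalarTower.algebraMap_apply A (Localization.Away b)
      (Localization.Away (a * b)) z).symm
  have hbuT : IsUnit (algebraMap A (Localization.Away (a * b)) b) :=
    IsLocalization.Away.isUnit_of_dvd (a * b) (dvd_mul_left b a)
  haveI : IsLocalization.Away (algebraMap A (Localization.Away b) a)
      (Localization.Away (a * b)) := by
    refine IsLocalization.Away.mk _ ?_ ?_ ?_
    · rw [hAT]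
      exact IsLocalization.Away.isUnit_of_dvd (a * b) (dvd_mul_right a b)
    · intro s
      obtain ⟨n, c, hc⟩ := IsLocalization.Away.surj (a * b) s
      refine ⟨n, IsLocalization.mk' (Localization.Away b) c
        (⟨b ^ n, n, rfl⟩ : Submonoid.powers b), ?_⟩
      apply (hbuT.pow n).mul_right_cancel
      have hmk : IsLocalization.mk' (Localization.Away b) c
          (⟨b ^ n, n, rfl⟩ : Submonoid.powers b) * algebraMap A (Localization.Away b) (b ^ n) =
          algebraMap A (Localization.Away b) c := IsLocalization.mk'_spec _ _ _
      calc s * algebraMap (Localization.Away b) (Localization.Away (a * b))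
            (algebraMap A (Localization.Away b) a) ^ n
            * algebraMap A (Localization.Away (a * b)) b ^ n
          = s * algebraMap A (Localization.Away (a * b)) (a * b) ^ n := by
            rw [hAT, ← map_pow, ← map_pow, mul_assoc, ← map_mul, ← mul_pow, map_pow]
        _ = algebraMap A (Localization.Away (a * b)) c := hc
        _ = algebraMap (Localization.Away b) (Localization.Away (a * b))
              (IsLocalization.mk' (Localization.Away b) c
                (⟨b ^ n, n, rfl⟩ : Submonoid.powers b) *
               algebraMap A (Localization.Away b) (b ^ n)) := by rw [hmk, hAT]
        _ = algebraMap (Localization.Away b) (Localization.Away (a * b))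
              (IsLocalization.mk' (Localization.Away b) c
                (⟨b ^ n, n, rfl⟩ : Submonoid.powers b)) *
              algebraMap A (Localization.Away (a * b)) b ^ n := by
            simp only [map_mul, map_pow, hAT]
    · intro y z hyz
      obtain ⟨k, y', hy'⟩ := IsLocalization.Away.surj b y
      obtain ⟨l, z', hz'⟩ := IsLocalization.Away.surj b z
      have eB : y * algebraMap A (Localization.Away b) b ^ (k + l) =
          algebraMap A (Localization.Away b) (y' * b ^ l) := by
        rw [map_mul, map_pow, pow_add, ← mul_assoc, hy']
      have eBz : z * algebraMap A (Localization.Away b) b ^ (k + l) =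
          algebraMap A (Localization.Away b) (z' * b ^ k) := by
        rw [map_mul, map_pow, pow_add, mul_comm (algebraMap A (Localization.Away b) b ^ k),
          ← mul_assoc, hz']
      have e1 : algebraMap A (Localization.Away (a * b)) (y' * b ^ l) =
          algebraMap A (Localization.Away (a * b)) (z' * b ^ k) := by
        rw [← hAT, ← hAT, ← eB, ← eBz, map_mul, map_mul, hyz]
      obtain ⟨m, hm⟩ := IsLocalization.Away.exists_of_eq (x := a * b) e1
      refine ⟨m, ?_⟩
      have hbuB : IsUnit (algebraMap A (Localization.Away b) b ^ (m + k + l)) :=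
        (IsLocalization.Away.algebraMap_isUnit b).pow _
      apply hbuB.mul_right_cancel
      have h2 : algebraMap A (Localization.Away b) ((a * b) ^ m * (y' * b ^ l)) =
          algebraMap A (Localization.Away b) ((a * b) ^ m * (z' * b ^ k)) := by rw [hm]
      calc algebraMap A (Localization.Away b) a ^ m * y *
            algebraMap A (Localization.Away b) b ^ (m + k + l)
          = algebraMap A (Localization.Away b) a ^ m *
              algebraMap A (Localization.Away b) b ^ (m + l) *
              (y * algebraMap A (Localization.Away b) b ^ k) := by
            rw [pow_add, pow_add, pow_add]; ring
        _ = algebraMap A (Localization.Away b) a ^ m *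
              algebraMap A (Localization.Away b) b ^ (m + l) *
              algebraMap A (Localization.Away b) y' := by rw [hy']
        _ = algebraMap A (Localization.Away b) ((a * b) ^ m * (y' * b ^ l)) := by
            simp only [map_mul, map_pow, mul_pow, pow_add]; ring
        _ = algebraMap A (Localization.Away b) ((a * b) ^ m * (z' * b ^ k)) := h2
        _ = algebraMap A (Localization.Away b) a ^ m *
              algebraMap A (Localization.Away b) b ^ (m + k) *
              algebraMap A (Localization.Away b) z' := by
            simp only [map_mul, map_pow, mul_pow, pow_add]; ring
        _ = algebraMap A (Localization.Away b) a ^ m *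
              algebraMap A (Localization.Away b) b ^ (m + k) *
              (z * algebraMap A (Localization.Away b) b ^ l) := by rw [hz']
        _ = algebraMap A (Localization.Away b) a ^ m * z *
              algebraMap A (Localization.Away b) b ^ (m + k + l) := by
            rw [pow_add, pow_add, pow_add]; ring
  rw [← halg] at h
  obtain ⟨⟨x, s⟩, e⟩ := (IsLocalization.mem_map_algebraMap_iff
    (M := Submonoid.powers (algebraMap A (Localization.Away b) a))
    (S := Localization.Away (a * b))).mp h
  obtain ⟨m, hm⟩ := s.2
  have hm' : algebraMap A (Localization.Away b) a ^ m = (s : Localization.Away b) := hm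
  rw [← map_mul] at e
  obtain ⟨c, hc⟩ := (IsLocalization.eq_iff_exists
    (Submonoid.powers (algebraMap A (Localization.Away b) a)) (Localization.Away (a * b))).mp e
  obtain ⟨k, hk⟩ := c.2
  have hk' : algebraMap A (Localization.Away b) a ^ k = (c : Localization.Away b) := hk
  refine ⟨k + m, ?_⟩
  have heq : algebraMap A (Localization.Away b) a ^ (k + m) * y =
      (c : Localization.Away b) * (y * (s : Localization.Away b)) := by
    rw [pow_add, hk', hm']; ring
  rw [heq, hc]
  exact Ij.mul_mem_left _ x.2

theorem glue_fg_ideals {A : Type*} [CommRing A] {n : ℕ} (f : Fin n → A)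
    (hf : Ideal.span (Set.range f) = ⊤)
    (I : ∀ i, Ideal (Localization.Away (f i)))
    (hIfg : ∀ i, (I i).FG)
    (hcomp : ∀ i j,
      (I i).map (locRingMap (f i) (f i * f j) (dvd_mul_right _ _)) =
      (I j).map (locRingMap (f j) (f i * f j) (dvd_mul_left _ _))) :
    ∃ J : Ideal A, J.FG ∧
      ∀ i, J.map (algebraMap A (Localization.Away (f i))) = I i := by
  classical
  choose s hs using hIfg
  have step : ∀ i j (c : A), algebraMap A (Localization.Away (f i)) c ∈ I i →
      ∃ N : ℕ, algebraMap A (Localization.Away (f j)) (f i ^ N * c) ∈ I j := by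
    intro i j c hc
    have h1 : locRingMap (f i) (f i * f j) (dvd_mul_right _ _)
        (algebraMap A (Localization.Away (f i)) c) ∈
        (I i).map (locRingMap (f i) (f i * f j) (dvd_mul_right _ _)) :=
      Ideal.mem_map_of_mem _ hc
    rw [hcomp i j, locRingMap_algebraMap,
      ← locRingMap_algebraMap (f j) (f i * f j) (dvd_mul_left _ _)] at h1
    obtain ⟨N, hN⟩ := exists_pow_mul_mem (f i) (f j) (I j) h1
    exact ⟨N, by rwa [map_mul, map_pow]⟩
  -- numerators of generators
  set c : ∀ i, Localization.Away (f i) → A :=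
    fun i x => (IsLocalization.Away.sec (f i) x).1 with hc
  set e : ∀ i, Localization.Away (f i) → ℕ :=
    fun i x => (IsLocalization.Away.sec (f i) x).2 with he
  have hsec : ∀ i (x : Localization.Away (f i)),
      x * algebraMap A (Localization.Away (f i)) (f i ^ e i x)
        = algebraMap A (Localization.Away (f i)) (c i x) :=
    fun i x => IsLocalization.Away.sec_spec (f i) x
  have hcmem : ∀ i (x : Localization.Away (f i)), x ∈ I i →
      algebraMap A (Localization.Away (f i)) (c i x) ∈ I i := by
    intro i x hx
    rw [← hsec i x]
    exact Ideal.mul_mem_right _ _ hx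
  have key : ∀ i, ∀ x ∈ s i, ∃ M : ℕ, ∀ j,
      algebraMap A (Localization.Away (f j)) (f i ^ M * c i x) ∈ I j := by
    intro i x hx
    have hxI : x ∈ I i := by rw [← hs i]; exact Ideal.subset_span hx
    have := fun j => step i j (c i x) (hcmem i x hxI)
    choose N hN using this
    refine ⟨Finset.univ.sup N, fun j => ?_⟩
    have hle : N j ≤ Finset.univ.sup N := Finset.le_sup (Finset.mem_univ j)
    have : f i ^ Finset.univ.sup N * c i x
        = f i ^ (Finset.univ.sup N - N j) * (f i ^ N j * c i x) := by
      rw [← mul_assoc, ← pow_add, Nat.sub_add_cancel hle]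
    rw [this, map_mul]
    exact Ideal.mul_mem_left _ _ (hN j)
  choose M hM using key
  set t : ∀ i, Finset A :=
    fun i => (s i).attach.image (fun x => f i ^ (M i x.1 x.2) * c i x.1) with ht
  set u : Finset A := Finset.univ.biUnion t with hu
  refine ⟨Ideal.span u, ⟨u, rfl⟩, fun j => ?_⟩
  rw [Ideal.map_span]
  apply le_antisymm
  · rw [Ideal.span_le]
    rintro _ ⟨x, hx, rfl⟩
    rw [hu, Finset.coe_biUnion] at hx
    simp only [Set.mem_iUnion, Finset.mem_coe, Finset.coe_univ, Set.mem_univ, true_and] at hx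
    obtain ⟨i, hxi⟩ := hx
    simp only [ht, Finset.mem_image, Finset.mem_attach, true_and] at hxi
    obtain ⟨w, hxeq⟩ := hxi
    obtain ⟨w2, hxeq2⟩ := hxeq
    rw [← hxeq2]
    exact hM i w2.1 _ j
  · conv_lhs => rw [← hs j]
    rw [Ideal.span_le]
    intro x hx
    have hmem : algebraMap A (Localization.Away (f j)) (f j ^ (M j x hx) * c j x) ∈
        Ideal.span (algebraMap A (Localization.Away (f j)) '' (u : Set A)) := by
      refine Ideal.subset_span ⟨_, ?_, rfl⟩
      rw [hu]
      refine Finset.mem_coe.mpr (Finset.mem_biUnion.mpr ⟨j, Finset.mem_univ j, ?_⟩)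
      rw [ht, Finset.mem_image]
      exact ⟨⟨x, hx⟩, Finset.mem_attach _ _, rfl⟩
    have hrew : algebraMap A (Localization.Away (f j)) (f j ^ (M j x hx) * c j x)
        = algebraMap A (Localization.Away (f j)) (f j) ^ (M j x hx + e j x) * x := by
      rw [map_mul, ← hsec j x, map_pow, map_pow, pow_add]
      ring
    rw [hrew] at hmem
    have hunit : IsUnit (algebraMap A (Localization.Away (f j)) (f j) ^ (M j x hx + e j x)) :=
      (IsLocalization.Away.algebraMap_isUnit (f j)).pow _
    have h2 := Ideal.mul_mem_left _ (↑hunit.unit⁻¹) hmem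
    rwa [← mul_assoc, hunit.val_inv_mul, one_mul] at h2
end

section
/- Let M be a module over a commutative ring A, and let f₁, …, f_l : A generate the unit ideal. Suppose given for each pair i, j an element s_{ij} of the localization M_{fᵢfⱼ} such that for all i, j, k the cocycle condition s_{jk} − s_{ik} + s_{ij} = 0 holds in M_{fᵢfⱼf_k}. Then there exist elements uᵢ : M_{fᵢ} for each i such that s_{ij} = uⱼ − uᵢ in M_{fᵢfⱼ} for all i, j. -/
/-- The canonical map `M_a → M_b` on localized modules when `a ∣ b`. -/
noncomputable def locModMap {R : Type*} [CommRing R] {M : Type*} [AddCommGroup M]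
    [Module R M] (a b : R) (h : a ∣ b) :
    LocalizedModule (Submonoid.powers a) M →ₗ[R]
      LocalizedModule (Submonoid.powers b) M :=
  LocalizedModule.lift _ (LocalizedModule.mkLinearMap (Submonoid.powers b) M)
    (by
      rintro ⟨x, n, rfl⟩
      obtain ⟨c, rfl⟩ := h
      have hu := IsLocalizedModule.map_units
        (LocalizedModule.mkLinearMap (Submonoid.powers (a * c)) M)
        (⟨(a * c) ^ n, ⟨n, rfl⟩⟩ : Submonoid.powers (a * c))
      simp only [mul_pow, map_mul] at hu
      exact (((Commute.all (a ^ n) (c ^ n)).map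
        (algebraMap R (Module.End R (LocalizedModule (Submonoid.powers (a * c)) M)))).isUnit_mul_iff.mp hu).1)

section aux
variable {R : Type*} [CommRing R] {M : Type*} [AddCommGroup M] [Module R M] {S : Submonoid R}

lemma locModMap_mk (a b : R) (h : a ∣ b) (c : R) (hc : b = a * c) (m : M) (p : ℕ) :
    locModMap a b h (LocalizedModule.mk m ⟨a ^ p, ⟨p, rfl⟩⟩)
      = LocalizedModule.mk (c ^ p • m) (⟨b ^ p, ⟨p, rfl⟩⟩ : Submonoid.powers b) := by
  unfold locModMap
  rw [LocalizedModule.lift_mk, Module.End.algebraMap_isUnit_inv_apply_eq_iff,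
    LocalizedModule.mkLinearMap_apply, LocalizedModule.smul'_mk, LocalizedModule.mk_eq]
  refine ⟨1, ?_⟩
  simp only [one_smul, Submonoid.mk_smul, smul_smul, hc, mul_pow]

lemma mk_add_same (x y : M) (t : S) :
    LocalizedModule.mk x t + LocalizedModule.mk y t = LocalizedModule.mk (x + y) t := by
  rw [LocalizedModule.mk_add_mk, LocalizedModule.mk_eq]
  refine ⟨1, ?_⟩
  simp only [one_mul, Submonoid.smul_def, Submonoid.coe_mul, smul_add, smul_smul]

lemma mk_sub_same (x y : M) (t : S) :
    LocalizedModule.mk x t - LocalizedModule.mk y t = LocalizedModule.mk (x - y) t := by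
  rw [sub_eq_add_neg, ← LocalizedModule.mk_neg, mk_add_same, ← sub_eq_add_neg]

lemma mk_pow_congr (a : R) (m : M) (p n : ℕ) (hpn : p ≤ n) :
    LocalizedModule.mk m (⟨a ^ p, ⟨p, rfl⟩⟩ : Submonoid.powers a)
      = LocalizedModule.mk (a ^ (n - p) • m) (⟨a ^ n, ⟨n, rfl⟩⟩ : Submonoid.powers a) := by
  rw [LocalizedModule.mk_eq]
  refine ⟨1, ?_⟩
  simp only [one_mul, Submonoid.smul_def, smul_smul, ← pow_add]
  rw [Nat.add_sub_cancel' hpn]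

lemma mk_pow_zero (a : R) (m : M) (n : ℕ)
    (h : LocalizedModule.mk m (⟨a ^ n, ⟨n, rfl⟩⟩ : Submonoid.powers a) = 0) :
    ∃ q : ℕ, a ^ q • m = 0 := by
  rw [← LocalizedModule.zero_mk (1 : Submonoid.powers a), LocalizedModule.mk_eq] at h
  obtain ⟨⟨x, q, rfl⟩, hx⟩ := h
  refine ⟨q, ?_⟩
  simpa [Submonoid.smul_def] using hx

end aux

theorem cech_degree_one_exact {R : Type*} [CommRing R] {M : Type*} [AddCommGroup M]
    [Module R M] {l : ℕ} (f : Fin l → R) (hf : Ideal.span (Set.range f) = ⊤)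
    (s : ∀ i j : Fin l, LocalizedModule (Submonoid.powers (f i * f j)) M)
    (hcoc : ∀ i j k : Fin l,
      locModMap (f j * f k) (f i * f j * f k) ⟨f i, by ring⟩ (s j k)
      - locModMap (f i * f k) (f i * f j * f k) ⟨f j, by ring⟩ (s i k)
      + locModMap (f i * f j) (f i * f j * f k) ⟨f k, by ring⟩ (s i j) = 0) :
    ∃ u : ∀ i : Fin l, LocalizedModule (Submonoid.powers (f i)) M,
      ∀ i j : Fin l,
        s i j = locModMap (f j) (f i * f j) ⟨f i, by ring⟩ (u j)
          - locModMap (f i) (f i * f j) ⟨f j, by ring⟩ (u i) := by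
  classical
  have hrep : ∀ i j : Fin l, ∃ (m : M) (p : ℕ),
      s i j = LocalizedModule.mk m
        (⟨(f i * f j) ^ p, ⟨p, rfl⟩⟩ : Submonoid.powers (f i * f j)) := by
    intro i j
    have : ∀ x : LocalizedModule (Submonoid.powers (f i * f j)) M, ∃ (m : M) (p : ℕ),
        x = LocalizedModule.mk m
          (⟨(f i * f j) ^ p, ⟨p, rfl⟩⟩ : Submonoid.powers (f i * f j)) := by
      intro x
      induction x using LocalizedModule.induction_on with
      | _ m t =>
        obtain ⟨p, hp⟩ := t.2
        exact ⟨m, p, by rw [show t = ⟨(f i * f j) ^ p, ⟨p, rfl⟩⟩ from Subtype.ext hp.symm]⟩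
    exact this (s i j)
  choose m₀ p₀ hs₀ using hrep
  set n : ℕ := Finset.univ.sup (fun ij : Fin l × Fin l => p₀ ij.1 ij.2) with hn
  have hple : ∀ i j, p₀ i j ≤ n := fun i j =>
    Finset.le_sup (f := fun ij : Fin l × Fin l => p₀ ij.1 ij.2) (Finset.mem_univ (i, j))
  set mm : ∀ _ : Fin l, ∀ _ : Fin l, M :=
    fun i j => (f i * f j) ^ (n - p₀ i j) • m₀ i j with hmm
  have hs : ∀ i j, s i j = LocalizedModule.mk (mm i j)
      (⟨(f i * f j) ^ n, ⟨n, rfl⟩⟩ : Submonoid.powers (f i * f j)) := fun i j => by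
    rw [hs₀ i j, mk_pow_congr _ _ _ n (hple i j)]
  have hdd : ∀ i j k : Fin l, ∃ q : ℕ,
      (f i * f j * f k) ^ q •
        (f i ^ n • mm j k - f j ^ n • mm i k + f k ^ n • mm i j) = 0 := by
    intro i j k
    apply mk_pow_zero
    have h1 := hcoc i j k
    rw [hs j k, hs i k, hs i j,
      locModMap_mk (f j * f k) (f i * f j * f k) _ (f i) (by ring),
      locModMap_mk (f i * f k) (f i * f j * f k) _ (f j) (by ring),
      locModMap_mk (f i * f j) (f i * f j * f k) _ (f k) (by ring),
      mk_sub_same, mk_add_same] at h1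
    exact h1
  choose q₀ hq₀ using hdd
  set N : ℕ := Finset.univ.sup
    (fun ijk : Fin l × Fin l × Fin l => q₀ ijk.1 ijk.2.1 ijk.2.2) with hNdef
  have hN : ∀ i j k, (f i * f j * f k) ^ N •
      (f i ^ n • mm j k - f j ^ n • mm i k + f k ^ n • mm i j) = 0 := by
    intro i j k
    have hle : q₀ i j k ≤ N := Finset.le_sup
      (f := fun ijk : Fin l × Fin l × Fin l => q₀ ijk.1 ijk.2.1 ijk.2.2)
      (Finset.mem_univ (i, j, k))
    rw [← Nat.sub_add_cancel hle, pow_add, mul_smul, hq₀ i j k, smul_zero]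
  obtain ⟨c, hc⟩ : ∃ c : Fin l → R, ∑ k, c k * f k ^ (n + N) = 1 := by
    have h1 := Ideal.span_pow_eq_top _ hf (n + N)
    rw [← Set.range_comp] at h1
    exact Ideal.mem_span_range_iff_exists_fun.mp (h1 ▸ Submodule.mem_top)
  refine ⟨fun i => LocalizedModule.mk (-(∑ k, (c k * (f i ^ N * f k ^ N)) • mm i k))
      (⟨f i ^ (n + N), ⟨n + N, rfl⟩⟩ : Submonoid.powers (f i)), fun i j => ?_⟩
  rw [hs i j,
    locModMap_mk (f j) (f i * f j) _ (f i) (by ring),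
    locModMap_mk (f i) (f i * f j) _ (f j) (by ring),
    mk_sub_same, LocalizedModule.mk_eq]
  refine ⟨1, ?_⟩
  simp only [one_mul, Submonoid.smul_def, OneMemClass.coe_one, one_smul]
  calc ((f i * f j) ^ (n + N) : R) • mm i j
      = ∑ k, (c k * f k ^ (n + N)) • (((f i * f j) ^ (n + N) : R) • mm i j) := by
        rw [← Finset.sum_smul, hc, one_smul]
    _ = ∑ k, ((f i * f j) ^ n : R) •
          (f j ^ (n + N) • ((c k * (f i ^ N * f k ^ N)) • mm i k)
            - f i ^ (n + N) • ((c k * (f j ^ N * f k ^ N)) • mm j k)) := by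
        refine Finset.sum_congr rfl fun k _ => ?_
        have h0 : (c k * (f i * f j) ^ n) • ((f i * f j * f k) ^ N •
            (f i ^ n • mm j k - f j ^ n • mm i k + f k ^ n • mm i j)) = 0 := by
          rw [hN i j k, smul_zero]
        have h2 : (c k * f k ^ (n + N)) • (((f i * f j) ^ (n + N) : R) • mm i j)
            - ((f i * f j) ^ n : R) •
              (f j ^ (n + N) • ((c k * (f i ^ N * f k ^ N)) • mm i k)
                - f i ^ (n + N) • ((c k * (f j ^ N * f k ^ N)) • mm j k))
            = (c k * (f i * f j) ^ n) • ((f i * f j * f k) ^ N •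
                (f i ^ n • mm j k - f j ^ n • mm i k + f k ^ n • mm i j)) := by
          module
        rw [h0] at h2
        exact sub_eq_zero.mp h2
    _ = ((f i * f j) ^ n : R) •
          (∑ k, (f j ^ (n + N) • ((c k * (f i ^ N * f k ^ N)) • mm i k)
            - f i ^ (n + N) • ((c k * (f j ^ N * f k ^ N)) • mm j k))) :=
        (Finset.smul_sum).symm
    _ = ((f i * f j) ^ n : R) •
          (f i ^ (n + N) • (-(∑ k, (c k * (f j ^ N * f k ^ N)) • mm j k))
            - f j ^ (n + N) • (-(∑ k, (c k * (f i ^ N * f k ^ N)) • mm i k))) := by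
        congr 1
        rw [Finset.sum_sub_distrib, smul_neg, smul_neg, sub_neg_eq_add,
          Finset.smul_sum, Finset.smul_sum]
        abel
end

section
/- Let R be a local commutative ring and a, b ∈ R^{n+1} two vectors, each having at least one invertible entry, such that a is not a unit multiple of b. Then for every pair (x, y) ∈ R² with at least one of x, y invertible, the vector x·a + y·b is nonzero (has some nonzero entry). -/
theorem line_through_two_points {R : Type*} [CommRing R] [IsLocalRing R] {n : ℕ}
    (a b : Fin (n + 1) → R)
    (ha : ∃ i, IsUnit (a i)) (hb : ∃ i, IsUnit (b i))
    (hab : ¬ ∃ lam : Rˣ, (fun i => (lam : R) * b i) = a) :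
    ∀ x y : R, (IsUnit x ∨ IsUnit y) → ∃ i, x * a i + y * b i ≠ 0 := by
  intro x y hxy
  by_contra h
  push_neg at h
  rcases hxy with hx | hy
  · obtain ⟨u, hu⟩ := hx
    have hx1 : ((u⁻¹ : Rˣ) : R) * x = 1 := by rw [← hu]; exact u.inv_mul
    have key : ∀ i, a i = (-(((u⁻¹ : Rˣ) : R) * y)) * b i := by
      intro i
      linear_combination ((u⁻¹ : Rˣ) : R) * h i - a i * hx1
    obtain ⟨j, hja⟩ := ha
    rw [key j] at hja
    have hc : IsUnit (-(((u⁻¹ : Rˣ) : R) * y)) := isUnit_of_mul_isUnit_left hja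
    exact hab ⟨hc.unit, funext fun i => by rw [hc.unit_spec]; exact (key i).symm⟩
  · obtain ⟨v, hv⟩ := hy
    have hy1 : ((v⁻¹ : Rˣ) : R) * y = 1 := by rw [← hv]; exact v.inv_mul
    have key : ∀ i, b i = (-(((v⁻¹ : Rˣ) : R) * x)) * a i := by
      intro i
      linear_combination ((v⁻¹ : Rˣ) : R) * h i - b i * hy1
    obtain ⟨j, hjb⟩ := hb
    rw [key j] at hjb
    have hd : IsUnit (-(((v⁻¹ : Rˣ) : R) * x)) := isUnit_of_mul_isUnit_left hjb
    refine hab ⟨hd.unit⁻¹, funext fun i => ?_⟩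
    have : ((hd.unit⁻¹ : Rˣ) : R) * ((hd.unit : R) * a i) = a i := by
      rw [← mul_assoc, Units.inv_mul, one_mul]
    rw [hd.unit_spec] at this
    rw [← key i] at this
    exact this
end

section
/- Let R be a local commutative ring and x, y ∈ R^{n+1} vectors each containing at least one invertible entry. Then there exists a unit λ : R with λ·x = y if and only if xᵢ·yⱼ = yᵢ·xⱼ for all i ≠ j. -/
theorem proj_equality_minors {R : Type*} [CommRing R] [IsLocalRing R] {n : ℕ}
    (x y : Fin (n + 1) → R)
    (hx : ∃ i, IsUnit (x i)) (hy : ∃ i, IsUnit (y i)) :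
    (∃ lam : Rˣ, ∀ i, (lam : R) * x i = y i) ↔
      ∀ i j, i ≠ j → x i * y j = y i * x j := by
  constructor
  · rintro ⟨lam, h⟩ i j _
    rw [← h i, ← h j]; ring
  · intro h
    obtain ⟨i₀, hxi⟩ := hx
    obtain ⟨j₀, hyj⟩ := hy
    have hall : ∀ i j, x i * y j = y i * x j := by
      intro i j
      by_cases hij : i = j
      · subst hij; ring
      · exact h i j hij
    have hyi : IsUnit (y i₀) := by
      have h1 : IsUnit (y i₀ * x j₀) := (hall i₀ j₀) ▸ (hxi.mul hyj)
      exact isUnit_of_mul_isUnit_left h1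
    refine ⟨hyi.unit * hxi.unit⁻¹, fun i => ?_⟩
    apply hxi.mul_left_cancel
    have hinv : x i₀ * (↑hxi.unit⁻¹ : R) = 1 := hxi.mul_val_inv
    have h2 : x i₀ * y i = y i₀ * x i := hall i₀ i
    push_cast
    calc x i₀ * ((↑hyi.unit : R) * (↑hxi.unit⁻¹ : R) * x i)
        = (x i₀ * (↑hxi.unit⁻¹ : R)) * ((↑hyi.unit : R) * x i) := by ring
      _ = y i₀ * x i := by rw [hinv, hyi.unit_spec]; ring
      _ = x i₀ * y i := h2.symm
end

section
/- Let R be a commutative ring and f : R. The localization (Π_{n:ℕ} R/(fⁿ))_f of the countable product module M = Π_{n:ℕ} R/(fⁿ) at f is zero if and only if there exists k : ℕ with f^k ∈ (f^{k+1}). -/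
lemma aux_smul_mk {R : Type*} [CommRing R] (I : Ideal R) (r x : R) :
    r • Ideal.Quotient.mk I x = Ideal.Quotient.mk I (r * x) := by
  rw [Algebra.smul_def]
  rw [show algebraMap R (R ⧸ I) r = Ideal.Quotient.mk I r from rfl, ← map_mul]

theorem localization_of_product_zero_iff {R : Type*} [CommRing R] (f : R) :
    Subsingleton
      (LocalizedModule (Submonoid.powers f) (∀ n : ℕ, R ⧸ Ideal.span {f ^ n})) ↔
      ∃ k : ℕ, f ^ k ∈ Ideal.span {f ^ (k + 1)} := by
  rw [LocalizedModule.subsingleton_iff]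
  constructor
  · intro H
    obtain ⟨r, ⟨k, rfl⟩, hr⟩ := H (fun n => Ideal.Quotient.mk _ 1)
    refine ⟨k, ?_⟩
    have h1 := congrFun hr (k + 1)
    simp only [Pi.smul_apply, Pi.zero_apply, aux_smul_mk, mul_one] at h1
    rwa [Ideal.Quotient.eq_zero_iff_mem] at h1
  · rintro ⟨k, hk⟩
    obtain ⟨a, ha⟩ := Ideal.mem_span_singleton'.mp hk
    have key : ∀ j : ℕ, f ^ k = a ^ j * f ^ (k + j) := by
      intro j
      induction j with
      | zero => simp
      | succ j ih =>
        have h2 : f ^ (k + j) = a * f ^ (k + (j + 1)) := by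
          rw [show k + (j + 1) = (k + 1) + j from by ring, pow_add, pow_add, ← ha]
          ring
        rw [ih, h2]; ring
    have mem : ∀ n : ℕ, f ^ k ∈ Ideal.span {f ^ n} := by
      intro n
      rw [key n]
      exact Ideal.mul_mem_left _ _ (by
        rw [pow_add]
        exact Ideal.mul_mem_left _ _ (Ideal.mem_span_singleton_self _))
    intro m
    refine ⟨f ^ k, ⟨k, rfl⟩, ?_⟩
    funext n
    obtain ⟨y, hy⟩ := Ideal.Quotient.mk_surjective (m n)
    rw [Pi.smul_apply, Pi.zero_apply, ← hy, aux_smul_mk, Ideal.Quotient.eq_zero_iff_mem]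
    exact Ideal.mul_mem_right _ _ (mem n)
end

section
/- Let R be a commutative ring and consider the pullback (fiber product) of R-algebras R[X] ×_{R[X,Y]/(1−XY)} R[Y], where R[X] → R[X,Y]/(1−XY) sends X to X and R[Y] → R[X,Y]/(1−XY) sends Y to Y. This pullback is isomorphic to R (via the constant polynomials). -/
open Polynomial LaurentPolynomial

lemma toLaurent_coeff_nat {R : Type*} [CommRing R] (p : R[X]) (n : ℕ) :
    (toLaurent p).coeff (n : ℤ) = p.coeff n := by
  rw [coeff_toLaurent]
  exact Finsupp.mapDomain_apply Nat.castEmbedding.injective p.toFinsupp.coeff n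

lemma toLaurent_coeff_neg {R : Type*} [CommRing R] (p : R[X]) (n : ℤ) (hn : n < 0) :
    (toLaurent p).coeff n = 0 := by
  rw [coeff_toLaurent, Finsupp.mapDomain_notin_range]
  rintro ⟨m, rfl⟩
  exact absurd hn (not_lt.mpr (Int.natCast_nonneg m))

lemma aeval_T_neg_one {R : Type*} [CommRing R] (q : R[X]) :
    aeval (T (-1) : R[T;T⁻¹]) q = invert (toLaurent q) := by
  have : (aeval (T (-1) : R[T;T⁻¹])) = (invert.toAlgHom.comp toLaurentAlg) := by
    apply Polynomial.algHom_ext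
    simp [toLaurentAlg]
  rw [this]
  rfl

theorem global_functions_P1 {R : Type*} [CommRing R] :
    ∃ e : R ≃+*
      (RingHom.eqLocus
        ((toLaurent : R[X] →+* R[T;T⁻¹]).comp (RingHom.fst R[X] R[X]))
        (((aeval (T (-1) : R[T;T⁻¹])).toRingHom : R[X] →+* R[T;T⁻¹]).comp
          (RingHom.snd R[X] R[X]))),
      ∀ r : R, ((e r : R[X] × R[X])) = (Polynomial.C r, Polynomial.C r) := by
  set S := (RingHom.eqLocus
        ((toLaurent : R[X] →+* R[T;T⁻¹]).comp (RingHom.fst R[X] R[X]))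
        (((aeval (T (-1) : R[T;T⁻¹])).toRingHom : R[X] →+* R[T;T⁻¹]).comp
          (RingHom.snd R[X] R[X]))) with hS
  have mem : ∀ r : R, ((Polynomial.C r, Polynomial.C r) : R[X] × R[X]) ∈ S := by
    intro r
    show toLaurent (Polynomial.C r) = aeval (T (-1) : R[T;T⁻¹]) (Polynomial.C r)
    rw [aeval_T_neg_one]
    simp
  let f : R →+* S :=
    { toFun := fun r => ⟨(Polynomial.C r, Polynomial.C r), mem r⟩
      map_one' := by ext <;> simp
      map_mul' := fun a b => by ext <;> simp
      map_zero' := by ext <;> simp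
      map_add' := fun a b => by ext <;> simp }
  have hbij : Function.Bijective f := by
    constructor
    · intro a b hab
      have : (Polynomial.C a : R[X]) = Polynomial.C b :=
        congrArg (fun x : S => (x : R[X] × R[X]).1) hab
      exact Polynomial.C_injective this
    · rintro ⟨⟨p, q⟩, hpq⟩
      have h : toLaurent p = invert (toLaurent q) := by
        have := hpq
        rw [← aeval_T_neg_one]
        exact this
      have h2 : invert (toLaurent p) = toLaurent q := by
        rw [h, LaurentPolynomial.involutive_invert]
      have hp : ∀ n : ℕ, 0 < n → p.coeff n = 0 := by
        intro n hn
        have := congrArg (fun x : R[T;T⁻¹] => x.coeff (n : ℤ)) h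
        rw [toLaurent_coeff_nat, LaurentPolynomial.invert_apply,
          toLaurent_coeff_neg q _ (by omega)] at this
        exact this
      have hq : ∀ n : ℕ, 0 < n → q.coeff n = 0 := by
        intro n hn
        have := congrArg (fun x : R[T;T⁻¹] => x.coeff (-(n : ℤ))) h
        rw [LaurentPolynomial.invert_apply, neg_neg, toLaurent_coeff_nat,
          toLaurent_coeff_neg p _ (by omega)] at this
        exact this.symm
      have hp0 : p = Polynomial.C (p.coeff 0) := by
        ext n
        rcases Nat.eq_zero_or_pos n with rfl | hn
        · simp
        · simp [hp n hn, Polynomial.coeff_C, Nat.pos_iff_ne_zero.mp hn]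
      have hq0 : q = Polynomial.C (q.coeff 0) := by
        ext n
        rcases Nat.eq_zero_or_pos n with rfl | hn
        · simp
        · simp [hq n hn, Polynomial.coeff_C, Nat.pos_iff_ne_zero.mp hn]
      have heq : p.coeff 0 = q.coeff 0 := by
        have := congrArg (fun x : R[T;T⁻¹] => x.coeff (0 : ℤ)) h
        rw [LaurentPolynomial.invert_apply, neg_zero] at this
        have h1 := toLaurent_coeff_nat p 0
        have h2' := toLaurent_coeff_nat q 0
        simp only [Nat.cast_zero] at h1 h2'
        rw [h1, h2'] at this
        exact this
      refine ⟨p.coeff 0, Subtype.ext (Prod.ext hp0.symm ?_)⟩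
      rw [heq]; exact hq0.symm
  exact ⟨RingEquiv.ofBijective f hbij, fun r => rfl⟩
end

section
/- Let R be a local commutative ring. Then inequality on the set of equivalence classes of R^{n+1}∖{unimodular-zero} under unit scaling — i.e., on projective n-space ℙⁿ(R) defined as vectors with some invertible entry modulo unit multiples — is an apartness relation: (i) ¬(x ≠ x); (ii) x ≠ y implies y ≠ x; (iii) if x ≠ y then for every z, x ≠ z or z ≠ y. -/
/-- Apartness of projective points represented by vectors: some 2×2 minor is invertible. -/
def projApart {R : Type*} [CommRing R] {n : ℕ} (a b : Fin (n + 1) → R) : Prop :=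
  ∃ i j, i ≠ j ∧ IsUnit (a i * b j - b i * a j)

theorem proj_apartness {R : Type*} [CommRing R] [IsLocalRing R] {n : ℕ} :
    (∀ a : Fin (n + 1) → R, (∃ i, IsUnit (a i)) → ¬ projApart a a) ∧
    (∀ a b : Fin (n + 1) → R, (∃ i, IsUnit (a i)) → (∃ i, IsUnit (b i)) →
      projApart a b → projApart b a) ∧
    (∀ a b c : Fin (n + 1) → R, (∃ i, IsUnit (a i)) → (∃ i, IsUnit (b i)) →
      (∃ i, IsUnit (c i)) → projApart a b → projApart a c ∨ projApart c b) := by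
  refine ⟨?_, ?_, ?_⟩
  · rintro a - ⟨i, j, hij, hu⟩
    rw [mul_comm, sub_self] at hu
    exact not_isUnit_zero hu
  · rintro a b - - ⟨i, j, hij, hu⟩
    refine ⟨i, j, hij, ?_⟩
    have : b i * a j - a i * b j = -(a i * b j - b i * a j) := by ring
    rw [this]
    exact hu.neg
  · rintro a b c - - ⟨k, hk⟩ ⟨i, j, hij, hu⟩
    have key : c k * (a i * b j - b i * a j) =
        (a i * c k - c i * a k) * b j + (-(a j * c k - c j * a k)) * b i
          + a k * (c i * b j - b i * c j) := by ring
    have huu : IsUnit ((a i * c k - c i * a k) * b j + (-(a j * c k - c j * a k)) * b i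
        + a k * (c i * b j - b i * c j)) := key ▸ hk.mul hu
    have hik : i ≠ k → IsUnit (a i * c k - c i * a k) → projApart a c ∨ projApart c b :=
      fun h h' => Or.inl ⟨i, k, h, h'⟩
    rcases IsLocalRing.isUnit_or_isUnit_of_isUnit_add huu with h | h
    · rcases IsLocalRing.isUnit_or_isUnit_of_isUnit_add h with h | h
      · have h' := isUnit_of_mul_isUnit_left h
        have hik : i ≠ k := by rintro rfl; rw [mul_comm, sub_self] at h'; exact not_isUnit_zero h'
        exact Or.inl ⟨i, k, hik, h'⟩
      · have h' := (isUnit_of_mul_isUnit_left h).neg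
        rw [neg_neg] at h'
        have hjk : j ≠ k := by rintro rfl; rw [mul_comm, sub_self] at h'; exact not_isUnit_zero h'
        exact Or.inl ⟨j, k, hjk, h'⟩
    · have h' := isUnit_of_mul_isUnit_right h
      refine Or.inr ⟨i, j, hij, ?_⟩
      exact h'
end
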